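/- A completely positive map Φ: M(n, ℂ) → M(n, ℂ) with Choi–Kraus operators E_1, …, E_m is irreducible (the only orthogonal projections P with Φ(P M(n,ℂ) P) ⊆ P M(n,ℂ) P are 0 and I_n) if and only if the matrix space S_Φ = ⟨E_1, …, E_m⟩ is irreducible, i.e., has no invariant subspace of ℂ^n other than 0 and ℂ^n. -/

import Mathlib

open Matrix

private lemma mulVec_ext' {n : ℕ} {A B : Matrix (Fin n) (Fin n) ℂ}
    (h : ∀ x : Fin n → ℂ, A *ᵥ x = B *ᵥ x) : A = B := by
  ext j k
  have := congrFun (h (Pi.single k 1)) j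
  simpa [Matrix.mulVec_single] using this

private lemma sum_mul_conjTranspose_eq_zero {N n : ℕ} (A : Fin N → Matrix (Fin n) (Fin n) ℂ)
    (h : ∑ i, A i * (A i)ᴴ = 0) (i0 : Fin N) : A i0 = 0 := by
  ext j k
  have h1 : (∑ i, A i * (A i)ᴴ) j j = 0 := by rw [h]; rfl
  rw [Matrix.sum_apply] at h1
  simp only [Matrix.mul_apply, Matrix.conjTranspose_apply, RCLike.star_def,
    Complex.mul_conj] at h1
  have h2 : ∑ i : Fin N, ∑ x : Fin n, Complex.normSq (A i j x) = 0 := by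
    exact_mod_cast h1
  have h3 := (Finset.sum_eq_zero_iff_of_nonneg (fun i _ =>
    Finset.sum_nonneg (fun x _ => Complex.normSq_nonneg _))).mp h2 i0 (Finset.mem_univ _)
  have h4 := (Finset.sum_eq_zero_iff_of_nonneg (fun x _ =>
    Complex.normSq_nonneg _)).mp h3 k (Finset.mem_univ _)
  simpa using Complex.normSq_eq_zero.mp h4

/-- A completely positive map `Φ(X) = ∑ i, E_i X E_i*` is irreducible (the only
orthogonal projections `P` with `Φ(P M(n,ℂ) P) ⊆ P M(n,ℂ) P` are `0` and `1`) iff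
the matrix space spanned by its Choi–Kraus operators is irreducible, i.e. has no
invariant subspace of `ℂ^n` (column vectors, acted on from the left) other than
`0` and `ℂ^n`. -/
theorem stmt_18 (n m : ℕ) (Es : Fin m → Matrix (Fin n) (Fin n) ℂ) :
    (∀ P : Matrix (Fin n) (Fin n) ℂ, P * P = P → Pᴴ = P →
        (∀ X : Matrix (Fin n) (Fin n) ℂ,
          P * (∑ i, Es i * (P * X * P) * (Es i)ᴴ) * P =
            ∑ i, Es i * (P * X * P) * (Es i)ᴴ) →
        P = 0 ∨ P = 1) ↔
      (∀ U : Submodule ℂ (Fin n → ℂ),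
        (∀ B ∈ Submodule.span ℂ (Set.range Es), ∀ u ∈ U, Matrix.mulVec B u ∈ U) →
          U = ⊥ ∨ U = ⊤) := by
  constructor
  · -- irreducible map → irreducible matrix space
    intro hP U hU
    set E := EuclideanSpace ℂ (Fin n)
    set K : Submodule ℂ E := U.comap (WithLp.linearEquiv 2 ℂ (Fin n → ℂ)).toLinearMap with hK
    set T : E →L[ℂ] E := K.subtypeL ∘L K.orthogonalProjection with hT
    set f : (Fin n → ℂ) →ₗ[ℂ] (Fin n → ℂ) := (WithLp.linearEquiv 2 ℂ (Fin n → ℂ)).toLinearMap ∘ₗ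
      (T : E →ₗ[ℂ] E) ∘ₗ (WithLp.linearEquiv 2 ℂ (Fin n → ℂ)).symm.toLinearMap with hf
    set P : Matrix (Fin n) (Fin n) ℂ := LinearMap.toMatrix' f with hPdef
    have hPv : ∀ x : Fin n → ℂ, P *ᵥ x = f x := by
      intro x
      rw [← Matrix.toLin'_apply, hPdef, Matrix.toLin'_toMatrix']
    have hmem : ∀ x : Fin n → ℂ, P *ᵥ x ∈ U := by
      intro x
      rw [hPv]
      exact (K.orthogonalProjection (WithLp.toLp 2 x)).2
    have hfix : ∀ v ∈ U, P *ᵥ v = v := by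
      intro v hv
      rw [hPv]
      have : K.orthogonalProjection ((⟨WithLp.toLp 2 v, hv⟩ : K) : E) = ⟨WithLp.toLp 2 v, hv⟩ :=
        K.orthogonalProjection_mem_subspace_eq_self (⟨WithLp.toLp 2 v, hv⟩ : K)
      show WithLp.ofLp ((K.orthogonalProjection (WithLp.toLp 2 v) : K) : E) = v
      rw [this]
    have hPP : P * P = P := by
      apply mulVec_ext'
      intro x
      rw [← Matrix.mulVec_mulVec]
      exact hfix _ (hmem x)
    have hsym : (T : E →ₗ[ℂ] E).IsSymmetric :=
      K.starProjection_isSymmetric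
    have hentry : ∀ j k, P j k =
        inner (𝕜 := ℂ) (EuclideanSpace.single j (1 : ℂ)) (T (EuclideanSpace.single k 1)) := by
      intro j k
      rw [EuclideanSpace.inner_single_left, _root_.map_one, one_mul, hPdef,
        LinearMap.toMatrix'_apply]
      rfl
    have hH : Pᴴ = P := by
      ext j k
      rw [Matrix.conjTranspose_apply, hentry k j, hentry j k, RCLike.star_def,
        inner_conj_symm]
      exact hsym (EuclideanSpace.single j (1 : ℂ)) (EuclideanSpace.single k 1)
    have hinv : ∀ i, P * Es i * P = Es i * P := by
      intro i
      apply mulVec_ext'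
      intro x
      have h1 : Es i *ᵥ (P *ᵥ x) ∈ U :=
        hU (Es i) (Submodule.subset_span ⟨i, rfl⟩) _ (hmem x)
      calc (P * Es i * P) *ᵥ x = P *ᵥ (Es i *ᵥ (P *ᵥ x)) := by
            simp [Matrix.mulVec_mulVec, Matrix.mul_assoc]
        _ = Es i *ᵥ (P *ᵥ x) := hfix _ h1
        _ = (Es i * P) *ᵥ x := by simp [Matrix.mulVec_mulVec]
    have hinvH : ∀ i, P * (Es i)ᴴ * P = P * (Es i)ᴴ := by
      intro i
      have := congrArg Matrix.conjTranspose (hinv i)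
      simpa [Matrix.conjTranspose_mul, hH, Matrix.mul_assoc] using this
    rcases hP P hPP hH (by
        intro X
        rw [Finset.mul_sum, Finset.sum_mul]
        refine Finset.sum_congr rfl fun i _ => ?_
        calc P * (Es i * (P * X * P) * (Es i)ᴴ) * P
            = (P * Es i * P) * X * (P * (Es i)ᴴ * P) := by simp only [Matrix.mul_assoc]
          _ = (Es i * P) * X * (P * (Es i)ᴴ) := by rw [hinv i, hinvH i]
          _ = Es i * (P * X * P) * (Es i)ᴴ := by simp only [Matrix.mul_assoc]) with h0 | h1
    · left
      rw [Submodule.eq_bot_iff]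
      intro v hv
      have := hfix v hv
      rw [h0, Matrix.zero_mulVec] at this
      exact this.symm
    · right
      rw [Submodule.eq_top_iff']
      intro x
      have := hmem x
      rwa [h1, Matrix.one_mulVec] at this
  · -- irreducible matrix space → irreducible map
    intro hU P hPP hH hΦ
    set S : Matrix (Fin n) (Fin n) ℂ := ∑ i, Es i * P * (Es i)ᴴ with hS
    have hPSP : P * S * P = S := by
      have h := hΦ 1
      simp only [Matrix.mul_one, hPP] at h
      exact h
    set A : Fin m → Matrix (Fin n) (Fin n) ℂ := fun i => (1 - P) * (Es i * P) with hA
    have hQP : (1 - P) * P = 0 := by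
      rw [Matrix.sub_mul, Matrix.one_mul, hPP, sub_self]
    have hPQ : P * (1 - P) = 0 := by
      rw [Matrix.mul_sub, Matrix.mul_one, hPP, sub_self]
    have hsum : ∑ i, A i * (A i)ᴴ = 0 := by
      have h1 : ∀ i, A i * (A i)ᴴ = (1 - P) * (Es i * P * (Es i)ᴴ) * (1 - P) := by
        intro i
        rw [hA]
        simp only [Matrix.conjTranspose_mul, Matrix.conjTranspose_sub,
          Matrix.conjTranspose_one, hH]
        calc (1 - P) * (Es i * P) * ((P * (Es i)ᴴ) * (1 - P))
            = (1 - P) * (Es i * (P * P) * (Es i)ᴴ) * (1 - P) := by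
              simp only [Matrix.mul_assoc]
          _ = (1 - P) * (Es i * P * (Es i)ᴴ) * (1 - P) := by rw [hPP]
      calc ∑ i, A i * (A i)ᴴ = (1 - P) * S * (1 - P) := by
            simp only [h1, hS, Finset.mul_sum, Finset.sum_mul]
        _ = (1 - P) * (P * S * P) * (1 - P) := by rw [hPSP]
        _ = ((1 - P) * P) * S * (P * (1 - P)) := by simp only [Matrix.mul_assoc]
        _ = 0 := by rw [hQP, hPQ, Matrix.zero_mul, Matrix.mul_zero]
    have hEsP : ∀ i, Es i * P = P * (Es i * P) := by
      intro i
      have h0 := sum_mul_conjTranspose_eq_zero A hsum i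
      rw [hA] at h0
      simp only [Matrix.sub_mul, Matrix.one_mul, sub_eq_zero] at h0
      exact h0
    set V : Submodule ℂ (Fin n → ℂ) := LinearMap.range (Matrix.mulVecLin P) with hV
    have hVmem : ∀ x, P *ᵥ x ∈ V := fun x => ⟨x, rfl⟩
    have hVinv : ∀ B ∈ Submodule.span ℂ (Set.range Es), ∀ u ∈ V, B *ᵥ u ∈ V := by
      intro B hB u hu
      induction hB using Submodule.span_induction with
      | mem B hBmem =>
        obtain ⟨i, rfl⟩ := hBmem
        obtain ⟨w, rfl⟩ := hu
        show Es i *ᵥ (P *ᵥ w) ∈ V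
        rw [Matrix.mulVec_mulVec, hEsP i, ← Matrix.mulVec_mulVec]
        exact hVmem _
      | zero => simp [Matrix.zero_mulVec]
      | add B C _ _ ihB ihC =>
        rw [Matrix.add_mulVec]
        exact V.add_mem ihB ihC
      | smul c B _ ih =>
        rw [Matrix.smul_mulVec]
        exact V.smul_mem c ih
    rcases hU V hVinv with h0 | h1
    · left
      apply mulVec_ext'
      intro x
      rw [Matrix.zero_mulVec]
      have : P *ᵥ x ∈ (⊥ : Submodule ℂ (Fin n → ℂ)) := h0 ▸ hVmem x
      simpa using this
    · right
      apply mulVec_ext'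
      intro x
      rw [Matrix.one_mulVec]
      have hx : x ∈ V := h1 ▸ Submodule.mem_top
      obtain ⟨w, rfl⟩ := hx
      show P *ᵥ (P *ᵥ w) = P *ᵥ w
      rw [Matrix.mulVec_mulVec, hPP]
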